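/- Every infinite directed partially ordered set I can be written as an increasing union ⋃_{α < |I|} I_α where each I_α is a directed subset of I of cardinality strictly less than |I|, and I_α ⊆ I_β whenever α < β. -/

import Mathlib

open Cardinal

universe u

namespace Stmt1Aux

open scoped Classical

variable {I : Type u} [PartialOrder I] [IsDirected I (· ≤ ·)] [Nonempty I]

/-- A choice of upper bound for each finite set. -/
noncomputable def ub (s : Finset I) : I :=
  (s.finite_toSet.exists_le).choose

lemma le_ub {s : Finset I} {x : I} (hx : x ∈ s) : x ≤ ub s :=
  (s.finite_toSet.exists_le).choose_spec x hx

/-- Iterative directed closure stages. -/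
noncomputable def g (S : Set I) : ℕ → Set I
  | 0 => S
  | n + 1 => g S n ∪ ub '' {s : Finset I | ↑s ⊆ g S n}

/-- The directed closure of a set. -/
noncomputable def cl (S : Set I) : Set I := ⋃ n, g S n

lemma g_mono_nat (S : Set I) : Monotone (g S) := by
  apply monotone_nat_of_le_succ
  intro n
  exact Set.subset_union_left

lemma subset_cl (S : Set I) : S ⊆ cl S :=
  Set.subset_iUnion (g S) 0

lemma g_mono_set {S T : Set I} (h : S ⊆ T) (n : ℕ) : g S n ⊆ g T n := by
  induction n with
  | zero => exact h
  | succ n ih =>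
      exact Set.union_subset_union ih
        (Set.image_mono (fun s hs => hs.trans ih))

lemma cl_mono {S T : Set I} (h : S ⊆ T) : cl S ⊆ cl T :=
  Set.iUnion_mono (g_mono_set h)

lemma cl_nonempty (S : Set I) : (cl S).Nonempty := by
  refine ⟨ub ∅, Set.mem_iUnion.2 ⟨1, Or.inr ⟨∅, ?_, rfl⟩⟩⟩
  simp

lemma directedOn_cl (S : Set I) : DirectedOn (· ≤ ·) (cl S) := by
  intro a ha b hb
  obtain ⟨m, ham⟩ := Set.mem_iUnion.1 ha
  obtain ⟨n, hbn⟩ := Set.mem_iUnion.1 hb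
  have haN : a ∈ g S (max m n) := g_mono_nat S (le_max_left m n) ham
  have hbN : b ∈ g S (max m n) := g_mono_nat S (le_max_right m n) hbn
  refine ⟨ub {a, b}, Set.mem_iUnion.2 ⟨max m n + 1, Or.inr ⟨{a, b}, ?_, rfl⟩⟩,
    le_ub (by simp), le_ub (by simp)⟩
  intro x hx
  simp only [Finset.coe_insert, Finset.coe_singleton, Set.mem_insert_iff,
    Set.mem_singleton_iff] at hx
  rcases hx with rfl | rfl
  · exact haN
  · exact hbN

lemma mk_subsets_le (A : Set I) :
    #{s : Finset I // ↑s ⊆ A} ≤ max ℵ₀ #A := by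
  have hinj : Function.Injective
      (fun s : {s : Finset I // ↑s ⊆ A} =>
        s.1.preimage (Subtype.val : A → I) (Set.injOn_of_injective Subtype.val_injective)) := by
    intro s t hst
    have hs : (s.1.preimage (Subtype.val : A → I)
        (Set.injOn_of_injective Subtype.val_injective)).image Subtype.val = s.1 := by
      rw [Finset.image_preimage]
      apply Finset.filter_true_of_mem
      intro x hx
      simpa [Subtype.range_coe] using s.2 hx
    have ht : (t.1.preimage (Subtype.val : A → I)
        (Set.injOn_of_injective Subtype.val_injective)).image Subtype.val = t.1 := by
      rw [Finset.image_preimage]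
      apply Finset.filter_true_of_mem
      intro x hx
      simpa [Subtype.range_coe] using t.2 hx
    apply Subtype.ext
    rw [← hs, ← ht]
    simp only at hst
    rw [hst]
  have hle : #{s : Finset I // ↑s ⊆ A} ≤ #(Finset A) := mk_le_of_injective hinj
  rcases Set.finite_or_infinite A with hA | hA
  · haveI : Finite A := hA
    haveI : Fintype A := Fintype.ofFinite A
    have : #(Finset A) < ℵ₀ := lt_aleph0_of_finite _
    exact le_trans hle (le_trans this.le (le_max_left _ _))
  · haveI : Infinite A := hA.to_subtype
    rw [mk_finset_of_infinite] at hle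
    exact le_trans hle (le_max_right _ _)

lemma mk_g_le (S : Set I) (n : ℕ) : #(g S n) ≤ max ℵ₀ #S := by
  induction n with
  | zero => exact le_max_right _ _
  | succ n ih =>
      have h1 : #(g S (n + 1)) ≤ #(g S n) + #(ub '' {s : Finset I | ↑s ⊆ g S n}) :=
        mk_union_le _ _
      have h2 : #(ub '' {s : Finset I | ↑s ⊆ g S n}) ≤ #{s : Finset I // ↑s ⊆ g S n} :=
        mk_image_le
      have h3 : #{s : Finset I // ↑s ⊆ g S n} ≤ max ℵ₀ #(g S n) := mk_subsets_le _
      have h4 : max ℵ₀ #(g S n) ≤ max ℵ₀ #S := by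
        exact max_le (le_max_left _ _) (le_trans ih le_rfl)
      calc #(g S (n + 1)) ≤ #(g S n) + #(ub '' {s : Finset I | ↑s ⊆ g S n}) := h1
        _ ≤ max ℵ₀ #S + max ℵ₀ #S := add_le_add ih (le_trans h2 (le_trans h3 h4))
        _ = max ℵ₀ #S := add_eq_self (le_max_left _ _)

lemma mk_cl_le (S : Set I) : #(cl S) ≤ max ℵ₀ #S := by
  have hEq : cl S = ⋃ n : ULift.{u} ℕ, g S n.down := by
    ext x
    simp only [cl, Set.mem_iUnion]
    exact ⟨fun ⟨n, hn⟩ => ⟨⟨n⟩, hn⟩, fun ⟨n, hn⟩ => ⟨n.down, hn⟩⟩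
  rw [hEq]
  have h1 : #(⋃ n : ULift.{u} ℕ, g S n.down) ≤ #(ULift.{u} ℕ) * ⨆ n : ULift.{u} ℕ, #(g S n.down) :=
    mk_iUnion_le _
  have h2 : (⨆ n : ULift.{u} ℕ, #(g S n.down)) ≤ max ℵ₀ #S :=
    ciSup_le' fun n => mk_g_le S n.down
  have h3 : #(ULift.{u} ℕ) = ℵ₀ := by simp
  calc #(⋃ n : ULift.{u} ℕ, g S n.down)
      ≤ #(ULift.{u} ℕ) * ⨆ n : ULift.{u} ℕ, #(g S n.down) := h1
    _ ≤ ℵ₀ * max ℵ₀ #S := by rw [h3]; exact mul_le_mul_right h2 _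
    _ = max ℵ₀ (max ℵ₀ #S) := mul_eq_max le_rfl (le_max_left _ _)
    _ = max ℵ₀ #S := max_eq_right (le_max_left _ _)

/-- Finite stages for the countable case. -/
noncomputable def F (e : ℕ → I) : ℕ → Finset I
  | 0 => {e 0}
  | n + 1 => insert (ub (insert (e n) (F e n))) (insert (e n) (F e n))

lemma F_subset_succ (e : ℕ → I) (n : ℕ) : F e n ⊆ F e (n + 1) := by
  intro x hx
  exact Finset.mem_insert.2 (Or.inr (Finset.mem_insert.2 (Or.inr hx)))

lemma F_mono (e : ℕ → I) {m n : ℕ} (h : m ≤ n) : F e m ⊆ F e n := by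
  induction h with
  | refl => exact Finset.Subset.refl _
  | step _ ih => exact ih.trans (F_subset_succ e _)

lemma mem_F_succ (e : ℕ → I) (n : ℕ) : e n ∈ F e (n + 1) :=
  Finset.mem_insert.2 (Or.inr (Finset.mem_insert.2 (Or.inl rfl)))

lemma F_has_top (e : ℕ → I) (n : ℕ) : ∃ m ∈ F e n, ∀ x ∈ F e n, x ≤ m := by
  cases n with
  | zero =>
      refine ⟨e 0, by simp [F], fun x hx => ?_⟩
      have hx' : x = e 0 := by simpa [F] using hx
      exact hx'.le
  | succ n =>
      refine ⟨ub (insert (e n) (F e n)), Finset.mem_insert_self _ _, fun x hx => ?_⟩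
      rcases Finset.mem_insert.1 hx with rfl | hx
      · exact le_rfl
      · exact le_ub hx

lemma F_directed (e : ℕ → I) (n : ℕ) : DirectedOn (· ≤ ·) (↑(F e n) : Set I) := by
  obtain ⟨m, hm, hle⟩ := F_has_top e n
  intro a ha b hb
  exact ⟨m, hm, hle a ha, hle b hb⟩

end Stmt1Aux

open Stmt1Aux in
/-- Every infinite directed partially ordered set `I` can be written as an increasing union
`⋃_{α < |I|} I_α` where each `I_α` is a directed subset of `I` of cardinality strictly less
than `|I|`, and `I_α ⊆ I_β` whenever `α < β`. -/
theorem stmt1 (I : Type u) [PartialOrder I] [IsDirected I (· ≤ ·)] [Infinite I] :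
    ∃ f : Ordinal.{u} → Set I,
      (∀ α β : Ordinal.{u}, α < β → β < (#I).ord → f α ⊆ f β) ∧
      (∀ α : Ordinal.{u}, α < (#I).ord →
        ((f α).Nonempty ∧ DirectedOn (· ≤ ·) (f α) ∧ #(f α) < #I)) ∧
      (∀ x : I, ∃ α : Ordinal.{u}, α < (#I).ord ∧ x ∈ f α) := by
  have haleph : ℵ₀ ≤ #I := aleph0_le_mk I
  rcases lt_or_eq_of_le haleph with hgt | heq
  · -- uncountable case
    set o : Ordinal.{u} := (#I).ord with ho
    have hT : #o.ToType = #I := by rw [mk_toType, ho, card_ord]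
    obtain ⟨e⟩ : Nonempty (o.ToType ≃ I) := Cardinal.eq.mp hT
    set pos : I → Ordinal.{u} :=
      fun x => (((Ordinal.ToType.mk (o := o))).symm (e.symm x)).1 with hpos
    refine ⟨fun α => cl {x : I | pos x < α}, ?_, ?_, ?_⟩
    · intro α β hαβ _
      apply cl_mono
      intro x hx
      have hx' : pos x < α := hx
      exact lt_trans hx' hαβ
    · intro α hα
      refine ⟨cl_nonempty _, directedOn_cl _, ?_⟩
      set t₀ : o.ToType := (Ordinal.ToType.mk (o := o)) ⟨α, hα⟩ with ht₀
      have hset : {x : I | pos x < α} = e '' (Set.Iio t₀) := by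
        ext x
        simp only [Set.mem_setOf_eq, Set.mem_image, hpos]
        constructor
        · intro hx
          refine ⟨e.symm x, ?_, e.apply_symm_apply x⟩
          have : ((Ordinal.ToType.mk (o := o))).symm (e.symm x) <
              ((Ordinal.ToType.mk (o := o))).symm t₀ := by
            rw [ht₀, OrderIso.symm_apply_apply]
            exact Subtype.mk_lt_mk.2 hx
          exact (OrderIso.lt_iff_lt _).1 this
        · rintro ⟨y, hy, rfl⟩
          rw [e.symm_apply_apply]
          have : ((Ordinal.ToType.mk (o := o))).symm y <
              ((Ordinal.ToType.mk (o := o))).symm t₀ := (OrderIso.lt_iff_lt _).2 hy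
          rw [ht₀, OrderIso.symm_apply_apply] at this
          exact Subtype.mk_lt_mk.1 this
      have hcard : #{x : I | pos x < α} < #I := by
        rw [hset]
        exact lt_of_le_of_lt mk_image_le (mk_Iio_ord_toType t₀)
      have := mk_cl_le {x : I | pos x < α}
      exact lt_of_le_of_lt this (max_lt hgt hcard)
    · intro x
      have hlim : Order.IsSuccLimit o := isSuccLimit_ord haleph
      have hposlt : pos x < o := (((Ordinal.ToType.mk (o := o))).symm (e.symm x)).2
      refine ⟨pos x + 1, ?_, ?_⟩
      · rw [Ordinal.add_one_eq_succ]
        exact hlim.succ_lt hposlt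
      · refine subset_cl _ ?_
        show pos x < pos x + 1
        rw [Ordinal.add_one_eq_succ]
        exact Order.lt_succ _
  · -- countable case : #I = ℵ₀
    have hord : (#I).ord = Ordinal.omega0 := by rw [← heq, ord_aleph0]
    haveI : Countable I := mk_le_aleph0_iff.mp heq.ge
    obtain ⟨d⟩ := nonempty_denumerable I
    set e : ℕ → I := fun n => (Denumerable.eqv I).symm n with he
    refine ⟨fun α => ⋃ (n : ℕ) (_ : (n : Ordinal) ≤ α), (↑(F e n) : Set I), ?_, ?_, ?_⟩
    · intro α β hαβ _ x hx
      simp only [Set.mem_iUnion] at hx ⊢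
      obtain ⟨n, hn, hxn⟩ := hx
      exact ⟨n, hn.trans hαβ.le, hxn⟩
    · intro α hα
      rw [hord] at hα
      obtain ⟨n₀, rfl⟩ := Ordinal.lt_omega0.1 hα
      beta_reduce
      have hfeq : (⋃ (n : ℕ) (_ : (n : Ordinal) ≤ (n₀ : Ordinal)), (↑(F e n) : Set I))
          = (↑(F e n₀) : Set I) := by
        apply Set.Subset.antisymm
        · intro x hx
          simp only [Set.mem_iUnion] at hx
          obtain ⟨n, hn, hxn⟩ := hx
          exact F_mono e (Nat.cast_le.1 hn) hxn
        · intro x hx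
          simp only [Set.mem_iUnion]
          exact ⟨n₀, le_rfl, hx⟩
      rw [hfeq]
      obtain ⟨m, hm, _⟩ := F_has_top e n₀
      refine ⟨⟨m, hm⟩, F_directed e n₀, ?_⟩
      rw [← heq]
      exact lt_aleph0_of_finite _
    · intro x
      refine ⟨((((Denumerable.eqv I) x + 1 : ℕ) : Ordinal)), ?_, ?_⟩
      · rw [hord]
        exact Ordinal.nat_lt_omega0 _
      · simp only [Set.mem_iUnion]
        refine ⟨(Denumerable.eqv I) x + 1, le_rfl, ?_⟩
        have hx : e ((Denumerable.eqv I) x) = x := (Denumerable.eqv I).symm_apply_apply x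
        have hmem := mem_F_succ e ((Denumerable.eqv I) x)
        rw [hx] at hmem
        exact hmem
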